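/- Let N_f ≥ 3 be an odd integer, m = (N_f − 1)/2, and q ∈ [0, 1/2]. Then Σ_{i=m+1}^{N_f} C(N_f, i)·qⁱ·(1−q)^{N_f−i} ≤ q, where C(N_f, i) denotes the binomial coefficient. -/

import Mathlib

open Finset

lemma binom_one (q : ℝ) (n : ℕ) :
    ∑ i ∈ range (n+1), (n.choose i : ℝ) * q^i * (1-q)^(n-i) = 1 := by
  have h := add_pow q (1-q) n
  simp only [add_sub_cancel, one_pow] at h
  conv_rhs => rw [h]
  exact Finset.sum_congr rfl (fun i _ => by ring)

lemma mean_identity (q : ℝ) (N : ℕ) (hN : 1 ≤ N) :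
    ∑ i ∈ range (N+1), (i : ℝ) * (N.choose i) * q^i * (1-q)^(N-i) = N * q := by
  obtain ⟨n, rfl⟩ := Nat.exists_eq_add_of_le hN
  rw [Finset.sum_range_succ']
  simp only [Nat.cast_zero, zero_mul, add_zero]
  have key : ∀ k ∈ range (1+n), ((k+1 : ℕ) : ℝ) * ((1+n).choose (k+1)) * q^(k+1) * (1-q)^(1+n-(k+1))
      = ((1+n : ℕ) : ℝ) * q * ((n.choose k : ℝ) * q^k * (1-q)^(n-k)) := by
    intro k hk
    have h1 : (k+1) * (1+n).choose (k+1) = (n+1) * n.choose k := by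
      rw [mul_comm]
      have := Nat.add_one_mul_choose_eq n k
      simpa [Nat.succ_eq_add_one, Nat.add_comm] using this.symm
    have h2 : 1 + n - (k+1) = n - k := by omega
    have h1' : ((k+1:ℕ):ℝ) * ((1+n).choose (k+1) : ℝ) = ((1+n:ℕ):ℝ) * (n.choose k : ℝ) := by
      have := congrArg (Nat.cast (R := ℝ)) h1
      push_cast at this ⊢
      linarith
    rw [h2]
    push_cast at h1' ⊢
    calc ((k:ℝ)+1) * ((1+n).choose (k+1):ℝ) * q^(k+1) * (1-q)^(n-k)
        = (((k:ℝ)+1) * ((1+n).choose (k+1):ℝ)) * (q^(k+1) * (1-q)^(n-k)) := by ring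
      _ = ((1+(n:ℝ)) * (n.choose k : ℝ)) * (q^(k+1) * (1-q)^(n-k)) := by rw [h1']
      _ = (1+(n:ℝ)) * q * ((n.choose k : ℝ) * q^k * (1-q)^(n-k)) := by ring
  rw [Finset.sum_congr rfl (fun k hk => by exact_mod_cast key k hk), ← Finset.mul_sum]
  have hb := binom_one q n
  rw [show range (1+n) = range (n+1) by rw [Nat.add_comm], hb]
  push_cast
  ring

/-- For an odd number `N_f ≥ 3` of repetitions and per-frame error probability `q ≤ 1/2`,
the majority-voting error probability does not exceed `q`:
`Σ_{i=m+1}^{N_f} C(N_f,i) qⁱ (1−q)^{N_f−i} ≤ q` with `m = (N_f−1)/2`. -/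
theorem majority_vote_improves (Nf m : ℕ) (hNfodd : Odd Nf) (hNf3 : 3 ≤ Nf)
    (hm : m = (Nf - 1) / 2) (q : ℝ) (hq : q ∈ Set.Icc (0 : ℝ) (1 / 2)) :
    ∑ i ∈ Finset.Icc (m + 1) Nf, (Nf.choose i : ℝ) * q ^ i * (1 - q) ^ (Nf - i) ≤ q := by
  obtain ⟨hq0, hq2⟩ := hq
  obtain ⟨k, hk⟩ := hNfodd
  have hNf : Nf = 2 * m + 1 := by omega
  have hm1 : 1 ≤ m := by omega
  have hNpos : (0:ℝ) < Nf := by positivity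
  have hNne : (Nf:ℝ) ≠ 0 := ne_of_gt hNpos
  have h1q : q ≤ 1 - q := by linarith
  have hmean : q = ∑ i ∈ range (Nf+1), ((i:ℝ)/Nf) * ((Nf.choose i : ℝ) * q^i * (1-q)^(Nf-i)) := by
    have h := mean_identity q Nf (by omega)
    have h2 : ∑ i ∈ range (Nf+1), ((i:ℝ)/Nf) * ((Nf.choose i : ℝ) * q^i * (1-q)^(Nf-i))
        = (∑ i ∈ range (Nf+1), (i : ℝ) * Nf.choose i * q^i * (1-q)^(Nf-i)) / Nf := by
      rw [Finset.sum_div]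
      exact Finset.sum_congr rfl (fun i _ => by ring)
    rw [h2, h]
    field_simp
  conv_rhs => rw [hmean]
  have hsplit : range (Nf+1) = range (m+1) ∪ Finset.Icc (m+1) Nf := by
    ext i
    simp only [Finset.mem_range, Finset.mem_union, Finset.mem_Icc]
    omega
  have hdisj : Disjoint (range (m+1)) (Finset.Icc (m+1) Nf) := by
    rw [Finset.disjoint_left]
    intro i hi hi'
    simp only [Finset.mem_range] at hi
    simp only [Finset.mem_Icc] at hi'
    omega
  rw [hsplit, Finset.sum_union hdisj]
  rw [← sub_nonneg]
  have hCB : ∑ i ∈ Finset.Icc (m+1) Nf, (1 - (i:ℝ)/Nf) * ((Nf.choose i : ℝ) * q^i * (1-q)^(Nf-i))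
      = ∑ i ∈ Finset.Icc (m+1) Nf, (Nf.choose i : ℝ) * q ^ i * (1 - q) ^ (Nf - i)
      - ∑ i ∈ Finset.Icc (m+1) Nf, ((i:ℝ)/Nf) * ((Nf.choose i : ℝ) * q^i * (1-q)^(Nf-i)) := by
    rw [← Finset.sum_sub_distrib]
    exact Finset.sum_congr rfl (fun i _ => by ring)
  have hrw : ∑ i ∈ range (m+1), ((i:ℝ)/Nf) * ((Nf.choose i : ℝ) * q^i * (1-q)^(Nf-i))
      + ∑ i ∈ Finset.Icc (m+1) Nf, ((i:ℝ)/Nf) * ((Nf.choose i : ℝ) * q^i * (1-q)^(Nf-i))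
      - ∑ i ∈ Finset.Icc (m+1) Nf, (Nf.choose i : ℝ) * q ^ i * (1 - q) ^ (Nf - i)
      = ∑ i ∈ range (m+1), ((i:ℝ)/Nf) * ((Nf.choose i : ℝ) * q^i * (1-q)^(Nf-i))
      - ∑ i ∈ Finset.Icc (m+1) Nf, (1 - (i:ℝ)/Nf) * ((Nf.choose i : ℝ) * q^i * (1-q)^(Nf-i)) := by
    rw [hCB]; ring
  rw [hrw, sub_nonneg]
  have hbij : ∑ i ∈ Finset.Icc (m+1) Nf, (1 - (i:ℝ)/Nf) * ((Nf.choose i : ℝ) * q^i * (1-q)^(Nf-i))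
      = ∑ j ∈ range (m+1), ((j:ℝ)/Nf) * ((Nf.choose j : ℝ) * q^(Nf-j) * (1-q)^j) := by
    apply Finset.sum_bij' (i := fun i _ => Nf - i) (j := fun j _ => Nf - j)
    · intro i hi; simp only [Finset.mem_Icc] at hi; simp only [Finset.mem_range]; omega
    · intro j hj; simp only [Finset.mem_range] at hj; simp only [Finset.mem_Icc]; omega
    · intro i hi; simp only [Finset.mem_Icc] at hi; omega
    · intro j hj; simp only [Finset.mem_range] at hj; omega
    · intro i hi
      simp only [Finset.mem_Icc] at hi
      have h1 : Nf.choose (Nf - i) = Nf.choose i := Nat.choose_symm hi.2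
      have h2 : Nf - (Nf - i) = i := by omega
      have h3 : ((Nf - i : ℕ) : ℝ) = (Nf : ℝ) - i := by
        push_cast [Nat.cast_sub hi.2]; ring
      rw [h1, h2, h3]
      field_simp
      try ring
  rw [hbij]
  apply Finset.sum_le_sum
  intro j hj
  simp only [Finset.mem_range] at hj
  have hjN : j ≤ Nf := by omega
  apply mul_le_mul_of_nonneg_left _ (by positivity)
  have key : q^(Nf-j) * (1-q)^j ≤ q^j * (1-q)^(Nf-j) := by
    have hd : Nf - j = j + (Nf - 2*j) := by omega
    rw [hd, pow_add, pow_add]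
    have hpow : q^(Nf-2*j) ≤ (1-q)^(Nf-2*j) := pow_le_pow_left₀ hq0 h1q _
    calc q^j * q^(Nf-2*j) * (1-q)^j = (q^j * (1-q)^j) * q^(Nf-2*j) := by ring
      _ ≤ (q^j * (1-q)^j) * (1-q)^(Nf-2*j) := by
          apply mul_le_mul_of_nonneg_left hpow
          have : (0:ℝ) ≤ 1 - q := by linarith
          positivity
      _ = q^j * ((1-q)^j * (1-q)^(Nf-2*j)) := by ring
  calc (Nf.choose j : ℝ) * q^(Nf-j) * (1-q)^j = (Nf.choose j : ℝ) * (q^(Nf-j) * (1-q)^j) := by ring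
    _ ≤ (Nf.choose j : ℝ) * (q^j * (1-q)^(Nf-j)) := by
        apply mul_le_mul_of_nonneg_left key (by positivity)
    _ = (Nf.choose j : ℝ) * q^j * (1-q)^(Nf-j) := by ring
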